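/- Voronoi cells in the Hilbert metric are stars with respect to their defining sites: let K be a convex body in ℝ^d, let S be a finite set of points (sites) in the interior of K, and let p ∈ S. Then the Voronoi cell V(p) = { q ∈ interior(K) : H_K(q,p) ≤ H_K(q,p′) for all p′ ∈ S } is star-shaped with respect to p, i.e., for every q ∈ V(p) the line segment from p to q is contained in V(p). -/

import Mathlib

/-- `H` is the Hilbert metric of the convex body `K`: `H p p = 0` for interior points,
and for distinct interior points `p, q`, letting `x` and `y` be the boundary points of the
chord of `K` through `p` and `q`, in the order `⟨x, p, q, y⟩`,
`H p q = (1/2) · ln ((‖p - y‖·‖q - x‖)/(‖q - y‖·‖p - x‖))`. -/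
def IsHilbertDist {d : ℕ} (K : Set (EuclideanSpace ℝ (Fin d)))
    (H : EuclideanSpace ℝ (Fin d) → EuclideanSpace ℝ (Fin d) → ℝ) : Prop :=
  (∀ p ∈ interior K, H p p = 0) ∧
  (∀ p ∈ interior K, ∀ q ∈ interior K, p ≠ q →
    ∃ x ∈ frontier K, ∃ y ∈ frontier K,
      p ∈ openSegment ℝ x q ∧ q ∈ openSegment ℝ p y ∧
      H p q = (1 / 2) * Real.log ((‖p - y‖ * ‖q - x‖) / (‖q - y‖ * ‖p - x‖)))


section HilbertVoronoiAux


variable {d : ℕ}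

local notation "E" => EuclideanSpace ℝ (Fin d)

lemma mem_openSeg {V : Type*} [AddCommGroup V] [Module ℝ V] {a c z : V} :
    z ∈ openSegment ℝ a c ↔ ∃ t : ℝ, t ∈ Set.Ioo (0:ℝ) 1 ∧ z = a + t • (c - a) := by
  rw [openSegment_eq_image']
  constructor
  · rintro ⟨t, ht, rfl⟩; exact ⟨t, ht, rfl⟩
  · rintro ⟨t, ht, rfl⟩; exact ⟨t, ht, rfl⟩

lemma chord_aux {K : Set E} (hKconv : Convex ℝ K) {p y₁ y₂ : E}
    (hp : p ∈ interior K) (hy₁ : y₁ ∈ frontier K) (hy₂ : y₂ ∈ frontier K)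
    {t₁ t₂ : ℝ} (ht₁ : t₁ ∈ Set.Ioo (0:ℝ) 1) (ht₂ : t₂ ∈ Set.Ioo (0:ℝ) 1)
    (heq : t₁ • (y₁ - p) = t₂ • (y₂ - p)) (hle : t₂ ≤ t₁) :
    y₁ = y₂ := by
  rcases eq_or_lt_of_le hle with h | h
  · rw [← h] at heq
    have := smul_right_injective E (ne_of_gt ht₂.1) heq
    exact sub_left_injective this
  · exfalso
    have ht₁0 : t₁ ≠ 0 := ne_of_gt ht₁.1
    have hy : y₁ = p + (t₂ / t₁) • (y₂ - p) := by
      have h2 : y₁ - p = (t₂ / t₁) • (y₂ - p) := by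
        calc y₁ - p = t₁⁻¹ • (t₁ • (y₁ - p)) := (inv_smul_smul₀ ht₁0 _).symm
          _ = t₁⁻¹ • (t₂ • (y₂ - p)) := by rw [heq]
          _ = (t₂ / t₁) • (y₂ - p) := by rw [smul_smul, div_eq_inv_mul]
      rw [← h2]; abel
    have hmem : y₁ ∈ openSegment ℝ p y₂ :=
      mem_openSeg.mpr ⟨t₂ / t₁, ⟨div_pos ht₂.1 ht₁.1, (div_lt_one ht₁.1).mpr h⟩, hy⟩
    have : y₁ ∈ interior K :=
      hKconv.openSegment_interior_closure_subset_interior hp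
        (frontier_subset_closure hy₂) hmem
    exact hy₁.2 this

lemma chord_unique {K : Set E} (hKconv : Convex ℝ K) {p q y₁ y₂ : E}
    (hp : p ∈ interior K) (hy₁ : y₁ ∈ frontier K) (hy₂ : y₂ ∈ frontier K)
    (h₁ : q ∈ openSegment ℝ p y₁) (h₂ : q ∈ openSegment ℝ p y₂) : y₁ = y₂ := by
  obtain ⟨t₁, ht₁, he₁⟩ := mem_openSeg.mp h₁
  obtain ⟨t₂, ht₂, he₂⟩ := mem_openSeg.mp h₂
  have heq : t₁ • (y₁ - p) = t₂ • (y₂ - p) := by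
    have := he₁.symm.trans he₂
    exact add_left_cancel this
  rcases le_total t₂ t₁ with h | h
  · exact chord_aux hKconv hp hy₁ hy₂ ht₁ ht₂ heq h
  · exact (chord_aux hKconv hp hy₂ hy₁ ht₂ ht₁ heq.symm h).symm

lemma support_at {K : Set E} (hKconv : Convex ℝ K) (hKint : (interior K).Nonempty)
    {y : E} (hy : y ∈ frontier K) :
    ∃ f : E →L[ℝ] ℝ, (∀ z ∈ interior K, f z < f y) ∧ (∀ k ∈ K, f k ≤ f y) := by
  obtain ⟨f, hf⟩ := geometric_hahn_banach_open_point hKconv.interior isOpen_interior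
    (fun h => hy.2 h)
  refine ⟨f, hf, fun k hk => ?_⟩
  obtain ⟨p₀, hp₀⟩ := hKint
  have h₀ : f p₀ < f y := hf p₀ hp₀
  by_contra hcon
  push_neg at hcon
  set t : ℝ := (f y - f p₀) / (f k - f p₀) with htdef
  have hd : 0 < f k - f p₀ := by linarith
  have ht : t ∈ Set.Ioo (0:ℝ) 1 := ⟨div_pos (by linarith) hd, (div_lt_one hd).mpr (by linarith)⟩
  have hzmem : p₀ + t • (k - p₀) ∈ openSegment ℝ p₀ k := mem_openSeg.mpr ⟨t, ht, rfl⟩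
  have hzi : p₀ + t • (k - p₀) ∈ interior K :=
    hKconv.openSegment_interior_closure_subset_interior hp₀ (subset_closure hk) hzmem
  have hlt := hf _ hzi
  have hfz : f (p₀ + t • (k - p₀)) = f p₀ + t * (f k - f p₀) := by
    simp [map_add, map_smul, map_sub, smul_eq_mul]
  rw [hfz, htdef, div_mul_cancel₀ _ (ne_of_gt hd)] at hlt
  linarith

lemma norm_param₁ {t : ℝ} (ht0 : 0 ≤ t) (a c : E) : ‖(a + t • (c - a)) - a‖ = t * ‖c - a‖ := by
  have : (a + t • (c - a)) - a = t • (c - a) := by abel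
  rw [this, norm_smul, Real.norm_eq_abs, abs_of_nonneg ht0]

lemma norm_param₂ {t : ℝ} (ht1 : t ≤ 1) (a c : E) :
    ‖(a + t • (c - a)) - c‖ = (1 - t) * ‖a - c‖ := by
  have : (a + t • (c - a)) - c = (1 - t) • (a - c) := by module
  rw [this, norm_smul, Real.norm_eq_abs, abs_of_nonneg (by linarith)]

lemma norm_pos_int_fr {K : Set E} {a y : E} (ha : a ∈ interior K) (hy : y ∈ frontier K) :
    0 < ‖a - y‖ := by
  rw [norm_sub_pos_iff]
  rintro rfl
  exact hy.2 ha

lemma funk {K : Set E} {a b y : E} (f : E →L[ℝ] ℝ) {s : ℝ}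
    (hK : ∀ k ∈ K, f k ≤ s) (ha : f a < s) (hyK : y ∈ K)
    (hb : b ∈ openSegment ℝ a y) :
    0 < s - f b ∧ (s - f a) * ‖b - y‖ ≤ (s - f b) * ‖a - y‖ ∧
      (f y = s → (s - f a) * ‖b - y‖ = (s - f b) * ‖a - y‖) := by
  obtain ⟨t, ht, rfl⟩ := mem_openSeg.mp hb
  have hfy : f y ≤ s := hK y hyK
  have hfb : f (a + t • (y - a)) = f a + t * (f y - f a) := by
    simp [map_add, map_smul, map_sub, smul_eq_mul]
  have hn := norm_param₂ ht.2.le a y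
  rw [hfb, hn]
  have hna : (0:ℝ) ≤ ‖a - y‖ := norm_nonneg _
  have k1 : (0:ℝ) ≤ t * (s - f y) := mul_nonneg ht.1.le (by linarith)
  have k2 : (0:ℝ) < (1 - t) * (s - f a) := mul_pos (by linarith [ht.2]) (by linarith)
  refine ⟨by nlinarith, by nlinarith [mul_nonneg k1 hna], fun hys => by rw [hys]; ring⟩

lemma seg_trans1 {V : Type*} [AddCommGroup V] [Module ℝ V] {a b c z : V}
    (hb : b ∈ openSegment ℝ a c) (hz : z ∈ openSegment ℝ a b) :
    z ∈ openSegment ℝ a c := by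
  rw [mem_openSeg] at *
  obtain ⟨t, ht, rfl⟩ := hb
  obtain ⟨s, hs, rfl⟩ := hz
  refine ⟨s * t, ⟨by nlinarith [ht.1, hs.1], by nlinarith [ht.1, ht.2, hs.1, hs.2]⟩, ?_⟩
  module

lemma seg_trans2 {V : Type*} [AddCommGroup V] [Module ℝ V] {a b c z : V}
    (hb : b ∈ openSegment ℝ a c) (hz : z ∈ openSegment ℝ a b) :
    b ∈ openSegment ℝ z c := by
  rw [mem_openSeg] at *
  obtain ⟨t, ht, rfl⟩ := hb
  obtain ⟨s, hs, rfl⟩ := hz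
  have hst : 0 < 1 - s * t := by nlinarith [ht.1, ht.2, hs.1, hs.2]
  refine ⟨(t - s * t) / (1 - s * t), ⟨?_, ?_⟩, ?_⟩
  · apply div_pos; nlinarith [ht.1, hs.2]; exact hst
  · rw [div_lt_one hst]; nlinarith [ht.2, hs.1]
  · have hst' : 1 - s * t ≠ 0 := hst.ne'
    match_scalars
    · linear_combination (div_mul_cancel₀ (t - s * t) hst')
    · linear_combination -(div_mul_cancel₀ (t - s * t) hst')


lemma H_nonneg {K : Set E} {H : EuclideanSpace ℝ (Fin d) → EuclideanSpace ℝ (Fin d) → ℝ}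
    (hH : IsHilbertDist K H) {p q : E} (hp : p ∈ interior K) (hq : q ∈ interior K) :
    0 ≤ H p q := by
  rcases eq_or_ne p q with rfl | hne
  · exact (hH.1 p hp).ge
  obtain ⟨x, hx, y, hy, hpx, hqy, hform⟩ := hH.2 p hp q hq hne
  rw [hform]
  have h1 : 0 < ‖q - y‖ := norm_pos_int_fr hq hy
  have h2 : 0 < ‖p - x‖ := norm_pos_int_fr hp hx
  obtain ⟨t, ht, hqe⟩ := mem_openSeg.mp hqy
  obtain ⟨u, hu, hpe⟩ := mem_openSeg.mp hpx
  have e1 : ‖q - y‖ = (1 - t) * ‖p - y‖ := by rw [hqe]; exact norm_param₂ ht.2.le p y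
  have e2 : ‖p - x‖ = u * ‖q - x‖ := by rw [hpe]; exact norm_param₁ hu.1.le x q
  have h3 : ‖q - y‖ ≤ ‖p - y‖ := by nlinarith [norm_nonneg (p - y), ht.1, ht.2]
  have h4 : ‖p - x‖ ≤ ‖q - x‖ := by nlinarith [norm_nonneg (q - x), hu.1, hu.2]
  have hone : (1:ℝ) ≤ (‖p - y‖ * ‖q - x‖) / (‖q - y‖ * ‖p - x‖) := by
    rw [le_div_iff₀ (by positivity)]
    nlinarith
  have := Real.log_nonneg hone
  linarith

lemma H_add {K : Set E} (hKconv : Convex ℝ K)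
    {H : EuclideanSpace ℝ (Fin d) → EuclideanSpace ℝ (Fin d) → ℝ} (hH : IsHilbertDist K H)
    {p q z : E} (hp : p ∈ interior K) (hq : q ∈ interior K)
    (hz : z ∈ openSegment ℝ p q) : H q p = H q z + H z p := by
  rcases eq_or_ne p q with rfl | hne
  · rw [openSegment_same, Set.mem_singleton_iff] at hz
    subst hz
    simp [hH.1 _ hp]
  have hzq : z ≠ q := by rintro rfl; exact hne (right_mem_openSegment_iff.mp hz)
  have hzp : z ≠ p := by rintro rfl; exact hne (left_mem_openSegment_iff.mp hz)
  have hzK : z ∈ interior K :=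
    hKconv.interior.segment_subset hp hq (openSegment_subset_segment ℝ p q hz)
  have hz' : z ∈ openSegment ℝ q p := by rw [openSegment_symm]; exact hz
  obtain ⟨x, hx, y, hy, h1, h2, form1⟩ := hH.2 q hq p hp hne.symm
  -- h1 : q ∈ openSegment ℝ x p, h2 : p ∈ openSegment ℝ q y
  have h1' : q ∈ openSegment ℝ p x := by rw [openSegment_symm]; exact h1
  have hzqy : z ∈ openSegment ℝ q y := seg_trans1 h2 hz'
  have hpzy : p ∈ openSegment ℝ z y := seg_trans2 h2 hz'
  have hqzx : q ∈ openSegment ℝ z x := seg_trans2 h1' hz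
  have hzpx : z ∈ openSegment ℝ p x := seg_trans1 h1' hz
  obtain ⟨x', hx', y', hy', g1, g2, form2⟩ := hH.2 q hq z hzK (Ne.symm hzq)
  -- g1 : q ∈ openSegment x' z, g2 : z ∈ openSegment q y'
  have hy'y : y' = y := chord_unique hKconv hq hy' hy g2 hzqy
  have hx'x : x' = x := by
    refine chord_unique hKconv hzK hx' hx ?_ hqzx
    rw [openSegment_symm]; exact g1
  rw [hy'y, hx'x] at form2
  obtain ⟨x'', hx'', y'', hy'', k1, k2, form3⟩ := hH.2 z hzK p hp hzp
  -- k1 : z ∈ openSegment x'' p, k2 : p ∈ openSegment z y''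
  have hy''y : y'' = y := chord_unique hKconv hzK hy'' hy k2 hpzy
  have hx''x : x'' = x := by
    refine chord_unique hKconv hp hx'' hx ?_ hzpx
    rw [openSegment_symm]; exact k1
  rw [hy''y, hx''x] at form3
  have n1 : 0 < ‖q - y‖ := norm_pos_int_fr hq hy
  have n2 : 0 < ‖p - x‖ := norm_pos_int_fr hp hx
  have n3 : 0 < ‖p - y‖ := norm_pos_int_fr hp hy
  have n4 : 0 < ‖q - x‖ := norm_pos_int_fr hq hx
  have n5 : 0 < ‖z - y‖ := norm_pos_int_fr hzK hy
  have n6 : 0 < ‖z - x‖ := norm_pos_int_fr hzK hx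
  rw [form1, form2, form3]
  have hre : (‖q - y‖ * ‖p - x‖) / (‖p - y‖ * ‖q - x‖)
      = ((‖q - y‖ * ‖z - x‖) / (‖z - y‖ * ‖q - x‖))
        * ((‖z - y‖ * ‖p - x‖) / (‖p - y‖ * ‖z - x‖)) := by
    field_simp
  rw [hre, Real.log_mul (by positivity) (by positivity)]
  ring

lemma ratio_chain {u v w A1 C1 A2 B2 B3 C3 : ℝ} (hu : 0 < u) (hv : 0 < v) (hw : 0 < w)
    (hC1 : 0 ≤ C1)
    (hA2 : 0 ≤ A2) (hB2 : 0 ≤ B2) (hB3 : 0 ≤ B3) (hC3 : 0 ≤ C3)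
    (hE : u * C1 = w * A1) (h2 : u * B2 ≤ v * A2) (h3 : v * C3 ≤ w * B3) :
    A1 * (B2 * C3) ≤ C1 * (A2 * B3) := by
  have k1 : (u * B2) * (v * C3) ≤ (v * A2) * (w * B3) :=
    mul_le_mul h2 h3 (by positivity) (by positivity)
  have k2 : u * (B2 * C3) ≤ w * (A2 * B3) := by
    have k2' : v * (u * (B2 * C3)) ≤ v * (w * (A2 * B3)) := by nlinarith
    exact le_of_mul_le_mul_left k2' hv
  have k4 : C1 * (u * (B2 * C3)) ≤ C1 * (w * (A2 * B3)) := mul_le_mul_of_nonneg_left k2 hC1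
  have e2 : w * (A1 * (B2 * C3)) = C1 * (u * (B2 * C3)) := by linear_combination (-(B2 * C3)) * hE
  have k5 : w * (A1 * (B2 * C3)) ≤ w * (C1 * (A2 * B3)) := by
    rw [e2]
    calc C1 * (u * (B2 * C3)) ≤ C1 * (w * (A2 * B3)) := k4
      _ = w * (C1 * (A2 * B3)) := by ring
  exact le_of_mul_le_mul_left k5 hw

lemma H_triangle {K : Set E} (hKconv : Convex ℝ K) (hKclosed : IsClosed K)
    (hKint : (interior K).Nonempty)
    {H : EuclideanSpace ℝ (Fin d) → EuclideanSpace ℝ (Fin d) → ℝ} (hH : IsHilbertDist K H)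
    {a b c : E} (ha : a ∈ interior K) (hb : b ∈ interior K) (hc : c ∈ interior K) :
    H a c ≤ H a b + H b c := by
  have hfr : frontier K ⊆ K := hKclosed.frontier_subset
  rcases eq_or_ne a b with rfl | hab
  · simp [hH.1 a ha]
  rcases eq_or_ne b c with rfl | hbc
  · simp [hH.1 b hb]
  rcases eq_or_ne a c with rfl | hac
  · rw [hH.1 a ha]
    exact add_nonneg (H_nonneg hH ha hb) (H_nonneg hH hb ha)
  obtain ⟨x1, hx1, y1, hy1, m1, m2, f1⟩ := hH.2 a ha c hc hac
  obtain ⟨x2, hx2, y2, hy2, n1, n2, f2⟩ := hH.2 a ha b hb hab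
  obtain ⟨x3, hx3, y3, hy3, o1, o2, f3⟩ := hH.2 b hb c hc hbc
  -- positivity of all norms
  have pA1 : 0 < ‖a - y1‖ := norm_pos_int_fr ha hy1
  have pC1 : 0 < ‖c - y1‖ := norm_pos_int_fr hc hy1
  have pA2 : 0 < ‖a - y2‖ := norm_pos_int_fr ha hy2
  have pB2 : 0 < ‖b - y2‖ := norm_pos_int_fr hb hy2
  have pB3 : 0 < ‖b - y3‖ := norm_pos_int_fr hb hy3
  have pC3 : 0 < ‖c - y3‖ := norm_pos_int_fr hc hy3
  have qA1 : 0 < ‖a - x1‖ := norm_pos_int_fr ha hx1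
  have qC1 : 0 < ‖c - x1‖ := norm_pos_int_fr hc hx1
  have qA2 : 0 < ‖a - x2‖ := norm_pos_int_fr ha hx2
  have qB2 : 0 < ‖b - x2‖ := norm_pos_int_fr hb hx2
  have qB3 : 0 < ‖b - x3‖ := norm_pos_int_fr hb hx3
  have qC3 : 0 < ‖c - x3‖ := norm_pos_int_fr hc hx3
  -- Claim I : ‖a-y1‖ (‖b-y2‖ ‖c-y3‖) ≤ ‖c-y1‖ (‖a-y2‖ ‖b-y3‖)
  have claimI : ‖a - y1‖ * (‖b - y2‖ * ‖c - y3‖) ≤ ‖c - y1‖ * (‖a - y2‖ * ‖b - y3‖) := by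
    obtain ⟨f, hflt, hfle⟩ := support_at hKconv hKint hy1
    have hfa : f a < f y1 := hflt a ha
    have F1 := funk (K := K) f hfle hfa (hfr hy1) m2
    have E1 := F1.2.2 rfl
    have F2 := funk (K := K) f hfle hfa (hfr hy2) n2
    have hfb : f b < f y1 := by linarith [F2.1]
    have F3 := funk (K := K) f hfle hfb (hfr hy3) o2
    exact ratio_chain (sub_pos.mpr hfa) F2.1 F1.1 pC1.le pA2.le pB2.le pB3.le pC3.le
      E1 F2.2.1 F3.2.1
  -- Claim II : ‖c-x1‖ (‖b-x3‖ ‖a-x2‖) ≤ ‖a-x1‖ (‖c-x3‖ ‖b-x2‖)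
  have claimII : ‖c - x1‖ * (‖b - x3‖ * ‖a - x2‖) ≤ ‖a - x1‖ * (‖c - x3‖ * ‖b - x2‖) := by
    obtain ⟨f, hflt, hfle⟩ := support_at hKconv hKint hx1
    have hfc : f c < f x1 := hflt c hc
    have m1' : a ∈ openSegment ℝ c x1 := by rw [openSegment_symm] at m1; exact m1
    have o1' : b ∈ openSegment ℝ c x3 := by rw [openSegment_symm] at o1; exact o1
    have n1' : a ∈ openSegment ℝ b x2 := by rw [openSegment_symm] at n1; exact n1
    have F1 := funk (K := K) f hfle hfc (hfr hx1) m1'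
    have E1 := F1.2.2 rfl
    have F2 := funk (K := K) f hfle hfc (hfr hx3) o1'
    have hfb : f b < f x1 := by linarith [F2.1]
    have F3 := funk (K := K) f hfle hfb (hfr hx2) n1'
    exact ratio_chain (sub_pos.mpr hfc) F2.1 F1.1 qA1.le qC3.le qB3.le qB2.le qA2.le
      E1 F2.2.1 F3.2.1
  -- combine
  rw [f1, f2, f3]
  have hprod : (‖a - y1‖ * ‖c - x1‖) / (‖c - y1‖ * ‖a - x1‖)
      ≤ ((‖a - y2‖ * ‖b - x2‖) / (‖b - y2‖ * ‖a - x2‖))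
        * ((‖b - y3‖ * ‖c - x3‖) / (‖c - y3‖ * ‖b - x3‖)) := by
    rw [div_mul_div_comm, div_le_div_iff₀ (by positivity) (by positivity)]
    have := mul_le_mul claimI claimII (by positivity) (by positivity)
    nlinarith [this]
  have hlog := Real.log_le_log (by positivity) hprod
  rw [Real.log_mul (by positivity) (by positivity)] at hlog
  linarith


end HilbertVoronoiAux

/-- Voronoi cells in the Hilbert metric are star-shaped with respect to their
defining sites. -/
theorem hilbert_voronoi_cell_star_shaped {d : ℕ} (K : Set (EuclideanSpace ℝ (Fin d)))
    (hKcomp : IsCompact K) (hKconv : Convex ℝ K) (hKint : (interior K).Nonempty)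
    (H : EuclideanSpace ℝ (Fin d) → EuclideanSpace ℝ (Fin d) → ℝ)
    (hH : IsHilbertDist K H)
    (S : Set (EuclideanSpace ℝ (Fin d))) (hSfin : S.Finite) (hS : S ⊆ interior K)
    (p : EuclideanSpace ℝ (Fin d)) (hpS : p ∈ S) :
    ∀ q ∈ {z | z ∈ interior K ∧ ∀ p' ∈ S, H z p ≤ H z p'},
      segment ℝ p q ⊆ {z | z ∈ interior K ∧ ∀ p' ∈ S, H z p ≤ H z p'} := by
  intro q hq z hz
  obtain ⟨hqK, hqV⟩ := hq
  have hpK : p ∈ interior K := hS hpS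
  have hzK : z ∈ interior K := hKconv.interior.segment_subset hpK hqK hz
  refine ⟨hzK, fun p' hp' => ?_⟩
  have hp'K : p' ∈ interior K := hS hp'
  rcases eq_or_ne z p with rfl | hzp
  · rw [hH.1 z hzK]
    exact H_nonneg hH hzK hp'K
  rcases eq_or_ne z q with rfl | hzq
  · exact hqV p' hp'
  have hpq : p ≠ q := by
    rintro rfl
    rw [segment_same] at hz
    exact hzp hz
  have hzo : z ∈ openSegment ℝ p q := by
    rcases hz with ⟨u, v, hu, hv, huv, rfl⟩
    have hu1 : u ≠ 1 := by
      rintro rfl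
      have : v = 0 := by linarith
      apply hzp
      rw [this]; simp
    have hv1 : v ≠ 1 := by
      rintro rfl
      have : u = 0 := by linarith
      apply hzq
      rw [this]; simp
    exact ⟨u, v, lt_of_le_of_ne hu (by rintro rfl; exact hv1 (by linarith)),
      lt_of_le_of_ne hv (by rintro rfl; exact hu1 (by linarith)), huv, rfl⟩
  have key1 : H q p = H q z + H z p := H_add hKconv hH hpK hqK hzo
  have key2 : H q p ≤ H q p' := hqV p' hp'
  have key3 : H q p' ≤ H q z + H z p' :=
    H_triangle hKconv hKcomp.isClosed hKint hH hqK hzK hp'K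
  linarith
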